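/- Let a = (a_n)_{n∈ℕ} be a bounded real sequence with ‖a‖_∞ := sup_n |a_n|, and let δ > 0. If k < l are consecutive elements of E_a^δ (i.e. k, l ∈ E_a^δ and no element of E_a^δ lies strictly between k and l), then 0 ≤ Σ_{k≤j<l} a_j − (l−k)δ ≤ ‖a‖_∞. -/
import Mathlib


open MeasureTheory Filter Topology
open scoped ENNReal

noncomputable section

namespace SRB

/-- `d_n(E) = #(E ∩ [1,n]) / n`. -/
def densN (E : Set ℕ) (n : ℕ) : ℝ := (Nat.card ↥(E ∩ Set.Icc 1 n) : ℝ) / n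

/-- upper asymptotic density -/
def upperDens (E : Set ℕ) : ℝ := Filter.atTop.limsup fun n => densN E n

/-- lower asymptotic density -/
def lowerDens (E : Set ℕ) : ℝ := Filter.atTop.liminf fun n => densN E n

/-- `E(M) = {k | k + m ∈ E for some 1 ≤ m ≤ M}`. -/
def EM (E : Set ℕ) (M : ℕ) : Set ℕ := {k | ∃ m, 1 ≤ m ∧ m ≤ M ∧ k + m ∈ E}

/-- the set of `δ`-hyperbolic times of the sequence `a`. -/
def Ehyp (a : ℕ → ℝ) (δ : ℝ) : Set ℕ :=
  {p | 1 ≤ p ∧ ∀ k < p, ((p : ℝ) - k) * δ ≤ ∑ l ∈ Finset.Ico k p, a l}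

/-- the set of `(δ,M)`-weakly hyperbolic times of the sequence `a`. -/
def Fweak (a : ℕ → ℝ) (δ : ℝ) (M : ℕ) : Set ℕ :=
  {p | 1 ≤ p ∧ ∀ k, p - M ≤ k → k < p → ((p : ℝ) - k) * δ ≤ ∑ l ∈ Finset.Ico k p, a l}

/-- the connected component (maximal interval of integers) of `p` in `S`. -/
def component (S : Set ℕ) (p : ℕ) : Set ℕ :=
  {q | q ∈ S ∧ ∀ r, min p q ≤ r → r ≤ max p q → r ∈ S}

/-- the set of `(δ,M)`-mildly hyperbolic times of the sequence `a`. -/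
def Gmild (a : ℕ → ℝ) (δ : ℝ) (M : ℕ) : Set ℕ :=
  {p | p ∈ EM (Fweak a δ M) M ∧
    ∀ k ∈ component (EM (Fweak a δ M) M) p, k < p →
      ((p : ℝ) - k) * (δ / 2) ≤ ∑ l ∈ Finset.Ico k p, a l}

variable {X : Type*} [MetricSpace X] [CompactSpace X] [MeasurableSpace X] [BorelSpace X]

/-- the sequence `Φ_x = (φ(Tⁿ x))ₙ`. -/
def Phi (T : X ≃ₜ X) (φ : X → ℝ) (x : X) : ℕ → ℝ := fun n => φ ((⇑T)^[n] x)

/-- the Birkhoff sum `φ_n(x)`. -/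
def birk (T : X ≃ₜ X) (φ : X → ℝ) (x : X) (n : ℕ) : ℝ := ∑ k ∈ Finset.range n, φ ((⇑T)^[k] x)

/-- `φ̄_*(x) = limsup_n φ_n(x)/n`. -/
def phiStar (T : X ≃ₜ X) (φ : X → ℝ) (x : X) : ℝ :=
  Filter.atTop.limsup fun n => birk T φ x n / n

/-- the empirical measure `μ_x^n`. -/
def emp (T : X ≃ₜ X) (x : X) (n : ℕ) : Measure X :=
  (n : ℝ≥0∞)⁻¹ • ∑ k ∈ Finset.range n, Measure.dirac ((⇑T)^[k] x)

open scoped Classical in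
/-- the empirical measure on a set of times, `μ_x^n[E]`. -/
def empOn (T : X ≃ₜ X) (x : X) (n : ℕ) (E : Set ℕ) : Measure X :=
  (n : ℝ≥0∞)⁻¹ • ∑ k ∈ Finset.range n, if k ∈ E then Measure.dirac ((⇑T)^[k] x) else 0

/-- weak-* convergence of a family of finite measures along a filter. -/
def WeakLim (L : Filter ℕ) (μs : ℕ → Measure X) (μ : Measure X) : Prop :=
  ∀ f : C(X, ℝ), Tendsto (fun n => ∫ y, f y ∂(μs n)) L (𝓝 (∫ y, f y ∂μ))

/-- `pw(x)`: the set of weak-* limit points of the empirical measures `(μ_x^n)_{n ≥ 1}`. -/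
def pw (T : X ≃ₜ X) (x : X) : Set (Measure X) :=
  {μ | IsProbabilityMeasure μ ∧ ∃ s : ℕ → ℕ, StrictMono s ∧ (∀ j, 1 ≤ s j) ∧
    ∀ f : C(X, ℝ), Tendsto (fun j => ∫ y, f y ∂(emp T x (s j))) atTop (𝓝 (∫ y, f y ∂μ))}

/-- `underline-d_φ(x) = lim_{δ→0⁺} lim_{M→∞} d̲(E^δ_{Φ_x}(M))`; both limits being monotone
they equal the supremum. -/
def lowerDphi (T : X ≃ₜ X) (φ : X → ℝ) (x : X) : ℝ :=
  ⨆ δ : Set.Ioi (0 : ℝ), ⨆ M : ℕ, lowerDens (EM (Ehyp (Phi T φ x) δ.1) M)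

/-- `d̄⁺ = lim_{δ→0⁺} limsup_M d̄(F_a^{δ,M}(M))`. -/
def upDplus (a : ℕ → ℝ) : ℝ :=
  ⨆ δ : Set.Ioi (0 : ℝ), Filter.atTop.limsup fun M => upperDens (EM (Fweak a δ.1 M) M)

/-- `d̄⁻ = lim_{δ→0⁺} liminf_M d̄(F_a^{δ,M}(M))`. -/
def upDminus (a : ℕ → ℝ) : ℝ :=
  ⨆ δ : Set.Ioi (0 : ℝ), Filter.atTop.liminf fun M => upperDens (EM (Fweak a δ.1 M) M)

/-- static entropy of a measure w.r.t. the finite partition given by the fibers of `q`. -/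
def Hstat {ι : Type*} [Fintype ι] (μ : Measure X) (q : X → ι) : ℝ :=
  -∑ i : ι, (μ (q ⁻¹' {i})).toReal * Real.log (μ (q ⁻¹' {i})).toReal

/-- the iterated partition `P^F` as a coding map. -/
def codeIter (T : X ≃ₜ X) {ι : Type*} (p : X → ι) (F : Finset ℕ) : X → (F → ι) :=
  fun x k => p ((⇑T)^[(k : ℕ)] x)

end SRB

namespace SRB

/-- if `a` is bounded with `‖a‖_∞ = sup_n |a_n|`, `δ > 0` and `k < l` are
consecutive elements of `E_a^δ`, then `0 ≤ ∑_{k≤j<l} a_j − (l−k)δ ≤ ‖a‖_∞`. -/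
theorem statement4 (a : ℕ → ℝ) (hbdd : BddAbove (Set.range fun n => |a n|))
    (δ : ℝ) (hδ : 0 < δ) (k l : ℕ)
    (hk : k ∈ Ehyp a δ) (hl : l ∈ Ehyp a δ) (hkl : k < l)
    (hcons : ∀ j, k < j → j < l → j ∉ Ehyp a δ) :
    0 ≤ (∑ j ∈ Finset.Ico k l, a j) - ((l : ℝ) - k) * δ ∧
      (∑ j ∈ Finset.Ico k l, a j) - ((l : ℝ) - k) * δ ≤ ⨆ n, |a n| := by
  have hsum_l := hl.2 k hkl
  have habs : ∀ n, a n ≤ ⨆ n, |a n| := fun n =>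
    (le_abs_self _).trans (le_ciSup hbdd n)
  refine ⟨by linarith, ?_⟩
  rcases Nat.lt_or_ge (k + 1) l with hlt | hge
  · -- case l - 1 > k
    set t := l - 1 with ht
    have htl : t + 1 = l := by omega
    have hkt : k < t := by omega
    have key : ∀ m, m < t → (∑ j ∈ Finset.Ico m t, a j) < ((t : ℝ) - m) * δ →
        ∃ m', m' ≤ k ∧ (∑ j ∈ Finset.Ico m' t, a j) < ((t : ℝ) - m') * δ := by
      intro m
      induction m using Nat.strong_induction_on with
      | _ m ih =>
        intro hmt hs
        by_cases hm : m ≤ k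
        · exact ⟨m, hm, hs⟩
        · have hmE : m ∉ Ehyp a δ := hcons m (lt_of_not_ge hm) (by omega)
          simp only [Ehyp, Set.mem_setOf_eq, not_and] at hmE
          have h1 := hmE (by omega)
          push_neg at h1
          obtain ⟨q, hq, hq2⟩ := h1
          have hsplit : (∑ j ∈ Finset.Ico q m, a j) + (∑ j ∈ Finset.Ico m t, a j)
              = ∑ j ∈ Finset.Ico q t, a j :=
            Finset.sum_Ico_consecutive a (le_of_lt hq) (le_of_lt hmt)
          have hq3 : (∑ j ∈ Finset.Ico q t, a j) < ((t : ℝ) - q) * δ := by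
            have hcast : ((t : ℝ) - q) * δ = ((m : ℝ) - q) * δ + ((t : ℝ) - m) * δ := by ring
            linarith
          exact ih q hq (by omega) hq3
    have htE : t ∉ Ehyp a δ := hcons t hkt (by omega)
    simp only [Ehyp, Set.mem_setOf_eq, not_and] at htE
    have h0 := htE (by omega)
    push_neg at h0
    obtain ⟨m0, hm0t, hm0s⟩ := h0
    obtain ⟨m, hmk, hms⟩ := key m0 hm0t hm0s
    have hkm : ((k : ℝ) - m) * δ ≤ ∑ j ∈ Finset.Ico m k, a j := by
      rcases eq_or_lt_of_le hmk with rfl | hmk'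
      · simp
      · exact hk.2 m hmk'
    have hsplit : (∑ j ∈ Finset.Ico m k, a j) + (∑ j ∈ Finset.Ico k t, a j)
        = ∑ j ∈ Finset.Ico m t, a j :=
      Finset.sum_Ico_consecutive a hmk (le_of_lt hkt)
    have hkt' : (∑ j ∈ Finset.Ico k t, a j) < ((t : ℝ) - k) * δ := by nlinarith
    have hsum : ∑ j ∈ Finset.Ico k l, a j = (∑ j ∈ Finset.Ico k t, a j) + a t := by
      rw [← htl, Finset.sum_Ico_succ_top (le_of_lt hkt)]
    have hcast : (t : ℝ) = (l : ℝ) - 1 := by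
      have : ((t : ℕ) : ℝ) + 1 = (l : ℝ) := by exact_mod_cast congrArg (Nat.cast : ℕ → ℝ) htl
      linarith
    have := habs t
    rw [hsum]
    rw [hcast] at hkt'
    nlinarith
  · -- case l = k + 1
    have hl1 : l = k + 1 := by omega
    subst hl1
    have hsum : ∑ j ∈ Finset.Ico k (k + 1), a j = a k := by simp
    have := habs k
    push_cast
    linarith

end SRB
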